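/- arXiv:2111.06435 — 2 statements merged into one kernel-verified Lean document; each statement's English description precedes it below -/
import Mathlib

section
/- Let S be a real symmetric N × N matrix (Sᵀ = S) with eigenvalues λ₁ ≥ λ₂ ≥ ⋯ ≥ λ_N listed in decreasing order (with multiplicity), and let K ≤ N. For every real N × K matrix Φ with orthonormal columns, i.e. Φᵀ * Φ = 1 (the K × K identity), the trace satisfies trace(Φᵀ * S * Φ) ≤ ∑_{i=1}^{K} λ_i. Moreover, equality is attained when the columns of Φ are chosen to be K orthonormal eigenvectors of S associated with the eigenvalues λ₁, …, λ_K. -/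
open Matrix Finset

lemma key_sum (N K : ℕ) (hK : K ≤ N) (lam : Fin N → ℝ) (hmono : Antitone lam)
    (p : Fin N → ℝ) (hp0 : ∀ i, 0 ≤ p i) (hp1 : ∀ i, p i ≤ 1)
    (hsum : ∑ i, p i = (K : ℝ)) :
    ∑ i, lam i * p i ≤ ∑ k : Fin K, lam (Fin.castLE hK k) := by
  rcases Nat.eq_zero_or_pos K with h0 | hKpos
  · subst h0
    have hz : ∀ i ∈ Finset.univ, p i = 0 := by
      intro i _
      have := (Finset.sum_eq_zero_iff_of_nonneg (fun i _ => hp0 i)).mp (by simpa using hsum)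
      exact this i (Finset.mem_univ i)
    simp only [Finset.univ_eq_empty, Finset.sum_empty]
    calc ∑ i, lam i * p i = 0 := Finset.sum_eq_zero (fun i hi => by rw [hz i hi, mul_zero])
    _ ≤ 0 := le_refl 0
  · set t : ℝ := lam ⟨K - 1, by omega⟩ with ht
    have hts : ∀ i : Fin N, (i : ℕ) < K → t ≤ lam i := by
      intro i hi; exact hmono (by simp [Fin.le_def]; omega)
    have hts' : ∀ i : Fin N, K ≤ (i : ℕ) → lam i ≤ t := by
      intro i hi; exact hmono (by simp [Fin.le_def]; omega)
    set e : Fin K ↪ Fin N := ⟨Fin.castLE hK, Fin.castLE_injective hK⟩ with he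
    set s : Finset (Fin N) := Finset.univ.map e with hs
    have hmem : ∀ i : Fin N, i ∈ s ↔ (i : ℕ) < K := by
      intro i
      simp only [hs, Finset.mem_map, Finset.mem_univ, true_and, he,
        Function.Embedding.coeFn_mk]
      constructor
      · rintro ⟨k, rfl⟩; exact k.isLt
      · intro hi; exact ⟨⟨i, hi⟩, rfl⟩
    have hcard : s.card = K := by simp [hs]
    have hsub : s ⊆ Finset.univ := Finset.subset_univ s
    have split : ∑ i, (lam i - t) * p i
        = ∑ i ∈ s, (lam i - t) * p i + ∑ i ∈ Finset.univ \ s, (lam i - t) * p i := by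
      rw [add_comm, Finset.sum_sdiff hsub]
    have h2 : ∑ i ∈ Finset.univ \ s, (lam i - t) * p i ≤ 0 := by
      apply Finset.sum_nonpos
      intro i hi
      have : ¬ (i : ℕ) < K := by
        rw [Finset.mem_sdiff] at hi; exact fun h => hi.2 ((hmem i).mpr h)
      exact mul_nonpos_of_nonpos_of_nonneg (by linarith [hts' i (by omega)]) (hp0 i)
    have h3 : ∑ i ∈ s, (lam i - t) * p i ≤ ∑ i ∈ s, (lam i - t) := by
      apply Finset.sum_le_sum
      intro i hi
      have h1 : t ≤ lam i := hts i ((hmem i).mp hi)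
      nlinarith [hp1 i, hp0 i]
    have h4 : ∑ i ∈ s, (lam i - t) = (∑ i ∈ s, lam i) - t * K := by
      rw [Finset.sum_sub_distrib, Finset.sum_const, hcard]
      ring_nf
    have h5 : ∑ i ∈ s, lam i = ∑ k : Fin K, lam (Fin.castLE hK k) := by
      rw [hs, Finset.sum_map]; rfl
    have h6 : ∑ i, lam i * p i = (∑ i, (lam i - t) * p i) + t * K := by
      rw [← hsum, Finset.mul_sum, ← Finset.sum_add_distrib]
      apply Finset.sum_congr rfl; intro i _; ring
    linarith [split, h2, h3]

/-- Ky Fan trace-maximization principle: for a real symmetric matrix `S` with eigenvalues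
`lam` listed in decreasing order (with multiplicity), and any `N × K` matrix `Φ` with
orthonormal columns, `trace (Φᵀ S Φ) ≤ λ₁ + ⋯ + λ_K`; equality holds when the columns of
`Φ` are orthonormal eigenvectors of `S` associated with `λ₁, …, λ_K`. -/
theorem ky_fan_trace_maximization (N K : ℕ) (hK : K ≤ N)
    (S : Matrix (Fin N) (Fin N) ℝ) (hS : Sᵀ = S)
    (lam : Fin N → ℝ) (hmono : Antitone lam)
    (hEig : ∃ V : Matrix (Fin N) (Fin N) ℝ,
      Vᵀ * V = 1 ∧ S = V * Matrix.diagonal lam * Vᵀ) :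
    (∀ Φ : Matrix (Fin N) (Fin K) ℝ, Φᵀ * Φ = 1 →
        (Φᵀ * S * Φ).trace ≤ ∑ k : Fin K, lam (Fin.castLE hK k)) ∧
    (∀ Φ : Matrix (Fin N) (Fin K) ℝ, Φᵀ * Φ = 1 →
        (∀ k : Fin K,
          S.mulVec (fun i => Φ i k) = lam (Fin.castLE hK k) • fun i => Φ i k) →
        (Φᵀ * S * Φ).trace = ∑ k : Fin K, lam (Fin.castLE hK k)) := by
  constructor
  · rintro Φ hΦ
    obtain ⟨V, hV, hSdef⟩ := hEig
    have hVV : V * Vᵀ = 1 := mul_eq_one_comm.mp hV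
    set W : Matrix (Fin N) (Fin K) ℝ := Vᵀ * Φ with hWdef
    have hWW : Wᵀ * W = 1 := by
      have : Wᵀ * W = Φᵀ * (V * Vᵀ) * Φ := by
        simp [hWdef, Matrix.transpose_mul, Matrix.mul_assoc]
      rw [this, hVV, Matrix.mul_one, hΦ]
    set p : Fin N → ℝ := fun i => ∑ k, W i k * W i k with hpdef
    -- trace rewrite
    have htr : (Φᵀ * S * Φ).trace = ∑ i, lam i * p i := by
      have : Φᵀ * S * Φ = Wᵀ * (Matrix.diagonal lam * W) := by
        rw [hSdef, hWdef, Matrix.transpose_mul, Matrix.transpose_transpose]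
        simp only [Matrix.mul_assoc]
      rw [this, Matrix.trace]
      simp only [Matrix.diag_apply, Matrix.mul_apply, Matrix.transpose_apply,
        Matrix.diagonal_apply, ite_mul, zero_mul, Finset.sum_ite_eq, Finset.mem_univ,
        if_true]
      rw [Finset.sum_comm]
      apply Finset.sum_congr rfl
      intro i _
      rw [hpdef, Finset.mul_sum]
      apply Finset.sum_congr rfl
      intro k _
      ring
    -- properties of p via projection P = W Wᵀ
    set P : Matrix (Fin N) (Fin N) ℝ := W * Wᵀ with hPdef
    have hPP : P * P = P := by
      rw [hPdef, Matrix.mul_assoc, ← Matrix.mul_assoc Wᵀ, hWW, Matrix.one_mul]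
    have hPsymm : Pᵀ = P := by rw [hPdef, Matrix.transpose_mul, Matrix.transpose_transpose]
    have hPdiag : ∀ i, P i i = p i := by
      intro i; rw [hPdef, hpdef, Matrix.mul_apply]; rfl
    have hp0 : ∀ i, 0 ≤ p i := by
      intro i; exact Finset.sum_nonneg (fun k _ => mul_self_nonneg _)
    have hp1 : ∀ i, p i ≤ 1 := by
      intro i
      have h1 : P i i = ∑ j, P i j * P i j := by
        conv_lhs => rw [← hPP]
        rw [Matrix.mul_apply]
        apply Finset.sum_congr rfl
        intro j _
        congr 1
        calc P j i = Pᵀ i j := rfl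
          _ = P i j := by rw [hPsymm]
      have h2 : P i i * P i i ≤ ∑ j, P i j * P i j :=
        Finset.single_le_sum (f := fun j => P i j * P i j)
          (fun j _ => mul_self_nonneg _) (Finset.mem_univ i)
      rw [← h1, hPdiag] at h2
      nlinarith [hp0 i]
    have hsum : ∑ i, p i = (K : ℝ) := by
      have : ∑ i, p i = P.trace := by
        rw [Matrix.trace]; exact (Finset.sum_congr rfl (fun i _ => (hPdiag i).symm))
      rw [this, hPdef, Matrix.trace_mul_comm, hWW, Matrix.trace_one]
      simp
    rw [htr]
    exact key_sum N K hK lam hmono p hp0 hp1 hsum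
  · rintro Φ hΦ hcols
    have hdiagone : ∀ k : Fin K, ∑ i, Φ i k * Φ i k = 1 := by
      intro k
      have := congrFun (congrFun hΦ k) k
      simpa [Matrix.mul_apply, Matrix.transpose_apply, Matrix.one_apply] using this
    rw [Matrix.trace]
    apply Finset.sum_congr rfl
    intro k _
    have hcol : ∀ i, (S * Φ) i k = lam (Fin.castLE hK k) * Φ i k := by
      intro i
      have := congrFun (hcols k) i
      simpa [Matrix.mulVec, dotProduct, Matrix.mul_apply] using this
    rw [Matrix.diag_apply, Matrix.mul_assoc, Matrix.mul_apply]
    calc ∑ i, Φᵀ k i * (S * Φ) i k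
        = ∑ i, lam (Fin.castLE hK k) * (Φ i k * Φ i k) := by
          apply Finset.sum_congr rfl
          intro i _
          rw [hcol i, Matrix.transpose_apply]; ring
      _ = lam (Fin.castLE hK k) * ∑ i, Φ i k * Φ i k := by rw [Finset.mul_sum]
      _ = lam (Fin.castLE hK k) := by rw [hdiagone k, mul_one]
end

section
/- Let U be a real N × M matrix and let λ₁ ≥ λ₂ ≥ ⋯ ≥ λ_N be the eigenvalues of the symmetric positive semidefinite matrix U * Uᵀ listed in decreasing order (with multiplicity), and let K ≤ N. Then for every real N × K matrix Φ with orthonormal columns (Φᵀ * Φ = 1, the K × K identity), the squared Frobenius reconstruction error satisfies ‖Φ * Φᵀ * U − U‖_F² ≥ ∑_{i=K+1}^{N} λ_i, and equality is attained when the columns of Φ are K orthonormal eigenvectors of U Uᵀ associated with the K largest eigenvalues λ₁, …, λ_K (equivalently, the first K left singular vectors of U). -/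
open Matrix

open Finset in
private lemma pod_sum_filter_lt {N K : ℕ} (hK : K ≤ N) (f : Fin N → ℝ) :
    ∑ i ∈ univ.filter (fun i : Fin N => (i : ℕ) < K), f i
      = ∑ k : Fin K, f (Fin.castLE hK k) := by
  have h : univ.filter (fun i : Fin N => (i : ℕ) < K) = Finset.map (Fin.castLEEmb hK) univ := by
    ext i
    simp only [Finset.mem_filter, Finset.mem_univ, true_and, Finset.mem_map]
    constructor
    · intro hi; exact ⟨⟨i, hi⟩, rfl⟩
    · rintro ⟨k, rfl⟩; exact k.2
  rw [h, Finset.sum_map]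
  rfl

open Finset in
private lemma pod_filter_card {N K : ℕ} (hK : K ≤ N) :
    (univ.filter (fun i : Fin N => (i : ℕ) < K)).card = K := by
  have h : univ.filter (fun i : Fin N => (i : ℕ) < K) = Finset.map (Fin.castLEEmb hK) univ := by
    ext i
    simp only [Finset.mem_filter, Finset.mem_univ, true_and, Finset.mem_map]
    constructor
    · intro hi; exact ⟨⟨i, hi⟩, rfl⟩
    · rintro ⟨k, rfl⟩; exact k.2
  rw [h, Finset.card_map]; simp

private lemma pod_frob_trace {N M : ℕ} (E : Matrix (Fin N) (Fin M) ℝ) :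
    ∑ i : Fin N, ∑ j : Fin M, (E i j) ^ 2 = Matrix.trace (E * Eᵀ) := by
  simp [Matrix.trace, Matrix.mul_apply, Matrix.diag, sq]

private lemma pod_err_trace {N M K : ℕ} (U : Matrix (Fin N) (Fin M) ℝ)
    (Φ : Matrix (Fin N) (Fin K) ℝ) (hΦ : Φᵀ * Φ = 1) :
    ∑ i : Fin N, ∑ j : Fin M, ((Φ * Φᵀ * U - U) i j) ^ 2
      = Matrix.trace (U * Uᵀ) - Matrix.trace (Φᵀ * (U * Uᵀ) * Φ) := by
  rw [pod_frob_trace]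
  set P := Φ * Φᵀ with hP
  have hPP : P * P = P := by
    rw [hP, Matrix.mul_assoc, ← Matrix.mul_assoc Φᵀ Φ Φᵀ, hΦ, Matrix.one_mul]
  have hPt : Pᵀ = P := by rw [hP, Matrix.transpose_mul, Matrix.transpose_transpose]
  have expand : (P * U - U) * (P * U - U)ᵀ
      = P * (U * Uᵀ) * P - P * (U * Uᵀ) - (U * Uᵀ) * P + U * Uᵀ := by
    rw [Matrix.transpose_sub, Matrix.transpose_mul, hPt]
    simp only [Matrix.sub_mul, Matrix.mul_sub, Matrix.mul_assoc]
    abel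
  rw [expand]
  have h1 : Matrix.trace (P * (U * Uᵀ) * P) = Matrix.trace (P * (U * Uᵀ)) := by
    rw [Matrix.trace_mul_cycle, ← Matrix.mul_assoc, hPP, Matrix.mul_assoc]
  have h2 : Matrix.trace ((U * Uᵀ) * P) = Matrix.trace (P * (U * Uᵀ)) :=
    Matrix.trace_mul_comm _ _
  have h3 : Matrix.trace (P * (U * Uᵀ)) = Matrix.trace (Φᵀ * (U * Uᵀ) * Φ) := by
    rw [hP, Matrix.mul_assoc, Matrix.trace_mul_comm, Matrix.mul_assoc]
  rw [Matrix.trace_add, Matrix.trace_sub, Matrix.trace_sub, h1, h2, h3]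
  ring

open Finset in
private lemma pod_combo {N K : ℕ} (hK : K ≤ N) (lam t : Fin N → ℝ) (hmono : Antitone lam)
    (hlam : ∀ i, 0 ≤ lam i) (ht0 : ∀ i, 0 ≤ t i) (ht1 : ∀ i, t i ≤ 1)
    (hsum : ∑ i, t i = K) :
    ∑ i, lam i * t i ≤ ∑ i ∈ univ.filter (fun i : Fin N => (i : ℕ) < K), lam i := by
  set c : ℝ := if h : K < N then lam ⟨K, h⟩ else 0 with hc
  have hcle : ∀ i : Fin N, (i : ℕ) < K → c ≤ lam i := by
    intro i hi
    by_cases h : K < N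
    · simp only [hc, dif_pos h]
      exact hmono (by simp [Fin.le_def]; omega)
    · simp only [hc, dif_neg h]; exact hlam i
  have hcge : ∀ i : Fin N, K ≤ (i : ℕ) → lam i ≤ c := by
    intro i hi
    have h : K < N := lt_of_le_of_lt hi i.2
    simp only [hc, dif_pos h]
    exact hmono (by simp [Fin.le_def]; omega)
  have key : ∑ i, lam i * t i = ∑ i, (lam i - c) * t i + c * K := by
    rw [← hsum, Finset.mul_sum, ← Finset.sum_add_distrib]
    congr 1; ext i; ring
  rw [key]
  have hsplit : ∑ i, (lam i - c) * t i
      = ∑ i ∈ univ.filter (fun i : Fin N => (i : ℕ) < K), (lam i - c) * t i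
        + ∑ i ∈ univ.filter (fun i : Fin N => ¬ (i : ℕ) < K), (lam i - c) * t i :=
    (Finset.sum_filter_add_sum_filter_not _ _ _).symm
  have hb1 : ∑ i ∈ univ.filter (fun i : Fin N => (i : ℕ) < K), (lam i - c) * t i
      ≤ ∑ i ∈ univ.filter (fun i : Fin N => (i : ℕ) < K), (lam i - c) := by
    apply Finset.sum_le_sum
    intro i hi
    have hi' : (i : ℕ) < K := (Finset.mem_filter.mp hi).2
    nlinarith [hcle i hi', ht0 i, ht1 i]
  have hb2 : ∑ i ∈ univ.filter (fun i : Fin N => ¬ (i : ℕ) < K), (lam i - c) * t i ≤ 0 := by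
    apply Finset.sum_nonpos
    intro i hi
    have hi' : K ≤ (i : ℕ) := by
      have := (Finset.mem_filter.mp hi).2; omega
    nlinarith [hcge i hi', ht0 i]
  have hsum_sub : ∑ i ∈ univ.filter (fun i : Fin N => (i : ℕ) < K), (lam i - c)
      = (∑ i ∈ univ.filter (fun i : Fin N => (i : ℕ) < K), lam i) - c * K := by
    rw [Finset.sum_sub_distrib, Finset.sum_const, pod_filter_card hK]
    ring
  linarith [hsplit.le, hsplit.ge, hb1, hb2, hsum_sub.le, hsum_sub.ge]

/-- POD optimality: for a snapshot matrix `U` with `U Uᵀ` having eigenvalues `lam` in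
decreasing order (with multiplicity), every orthonormal `Φ` satisfies
`‖ΦΦᵀU − U‖_F² ≥ λ_{K+1} + ⋯ + λ_N`, with equality when the columns of `Φ` are
orthonormal eigenvectors of `U Uᵀ` associated with the `K` largest eigenvalues. -/
theorem pod_error_lower_bound (N M K : ℕ) (hK : K ≤ N)
    (U : Matrix (Fin N) (Fin M) ℝ)
    (lam : Fin N → ℝ) (hmono : Antitone lam)
    (hEig : ∃ V : Matrix (Fin N) (Fin N) ℝ,
      Vᵀ * V = 1 ∧ U * Uᵀ = V * Matrix.diagonal lam * Vᵀ) :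
    (∀ Φ : Matrix (Fin N) (Fin K) ℝ, Φᵀ * Φ = 1 →
        (∑ i ∈ Finset.univ.filter (fun i : Fin N => K ≤ (i : ℕ)), lam i)
          ≤ ∑ i : Fin N, ∑ j : Fin M, ((Φ * Φᵀ * U - U) i j) ^ 2) ∧
    (∀ Φ : Matrix (Fin N) (Fin K) ℝ, Φᵀ * Φ = 1 →
        (∀ k : Fin K,
          (U * Uᵀ).mulVec (fun i => Φ i k) = lam (Fin.castLE hK k) • fun i => Φ i k) →
        (∑ i : Fin N, ∑ j : Fin M, ((Φ * Φᵀ * U - U) i j) ^ 2)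
          = ∑ i ∈ Finset.univ.filter (fun i : Fin N => K ≤ (i : ℕ)), lam i) := by
  obtain ⟨V, hV, hA⟩ := hEig
  have hVVt : V * Vᵀ = 1 := mul_eq_one_comm.mp hV
  have hD : Matrix.diagonal lam = Vᵀ * (U * Uᵀ) * V := by
    rw [hA, Matrix.mul_assoc, Matrix.mul_assoc, Matrix.mul_assoc, hV, Matrix.mul_one,
      ← Matrix.mul_assoc, hV, Matrix.one_mul]
  have hlam : ∀ i, 0 ≤ lam i := by
    intro i
    have h1 : Vᵀ * (U * Uᵀ) * V = (Vᵀ * U) * (Vᵀ * U)ᵀ := by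
      rw [Matrix.transpose_mul, Matrix.transpose_transpose]
      simp only [Matrix.mul_assoc]
    have h2 : lam i = ∑ j, ((Vᵀ * U) i j) ^ 2 := by
      have := congrArg (fun X => X i i) hD
      simp only [Matrix.diagonal_apply_eq] at this
      rw [this, h1, Matrix.mul_apply]
      simp [sq, Matrix.transpose_apply]
    rw [h2]
    exact Finset.sum_nonneg fun j _ => sq_nonneg _
  have htrA : Matrix.trace (U * Uᵀ) = ∑ i, lam i := by
    rw [hA, Matrix.trace_mul_cycle]
    rw [hV, Matrix.one_mul, Matrix.trace_diagonal]
  have hfe : Finset.univ.filter (fun i : Fin N => ¬ (i : ℕ) < K)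
      = Finset.univ.filter (fun i : Fin N => K ≤ (i : ℕ)) := by
    ext i; simp [Nat.not_lt]
  have hcompl : (∑ i ∈ Finset.univ.filter (fun i : Fin N => K ≤ (i : ℕ)), lam i)
      = (∑ i, lam i) - ∑ i ∈ Finset.univ.filter (fun i : Fin N => (i : ℕ) < K), lam i := by
    rw [← Finset.sum_filter_add_sum_filter_not Finset.univ (fun i : Fin N => (i : ℕ) < K) lam,
      hfe]
    ring
  constructor
  · -- lower bound
    intro Φ hΦ
    rw [pod_err_trace U Φ hΦ, htrA, hcompl]
    have hub : Matrix.trace (Φᵀ * (U * Uᵀ) * Φ)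
        ≤ ∑ i ∈ Finset.univ.filter (fun i : Fin N => (i : ℕ) < K), lam i := by
      set W := Vᵀ * Φ with hW
      set t : Fin N → ℝ := fun i => ∑ k, (W i k) ^ 2 with ht
      have hWW : Wᵀ * W = 1 := by
        rw [hW, Matrix.transpose_mul, Matrix.transpose_transpose, Matrix.mul_assoc,
          ← Matrix.mul_assoc V Vᵀ Φ, hVVt, Matrix.one_mul, hΦ]
      have ha : Matrix.trace (Φᵀ * (U * Uᵀ) * Φ) = ∑ i, lam i * t i := by
        have h0 : Φᵀ * (U * Uᵀ) * Φ = Wᵀ * (Matrix.diagonal lam * W) := by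
          rw [hA, hW, Matrix.transpose_mul, Matrix.transpose_transpose]
          simp only [Matrix.mul_assoc]
        rw [h0]
        simp only [Matrix.trace, Matrix.diag, Matrix.mul_apply, Matrix.transpose_apply,
          Matrix.diagonal_mul]
        rw [Finset.sum_comm]
        apply Finset.sum_congr rfl
        intro i _
        simp only [ht, Finset.mul_sum]
        apply Finset.sum_congr rfl
        intro k _
        rw [Finset.sum_eq_single i]
        · simp only [Matrix.diagonal_apply_eq]; ring
        · intro b _ hb
          rw [Matrix.diagonal_apply_ne _ (Ne.symm hb)]
          ring
        · simp
      have hb : ∑ i, t i = (K : ℝ) := by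
        have h1 : ∑ i, t i = ∑ k : Fin K, (Wᵀ * W) k k := by
          simp only [ht, Matrix.mul_apply, Matrix.transpose_apply, sq]
          rw [Finset.sum_comm]
        rw [h1, hWW]
        simp [Matrix.one_apply]
      have hc0 : ∀ i, 0 ≤ t i := fun i => Finset.sum_nonneg fun k _ => sq_nonneg _
      have hc1 : ∀ i, t i ≤ 1 := by
        intro i
        set Q : Matrix (Fin N) (Fin N) ℝ := W * Wᵀ with hQ
        have hQQ : Q * Q = Q := by
          rw [hQ, Matrix.mul_assoc, ← Matrix.mul_assoc Wᵀ W Wᵀ, hWW, Matrix.one_mul]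
        have hQt : Qᵀ = Q := by rw [hQ, Matrix.transpose_mul, Matrix.transpose_transpose]
        have hQii : Q i i = t i := by
          simp [hQ, Matrix.mul_apply, Matrix.transpose_apply, ht, sq]
        set R : Matrix (Fin N) (Fin N) ℝ := 1 - Q with hR
        have hproj : (R * Rᵀ) i i = R i i := by
          rw [hR, Matrix.transpose_sub, Matrix.transpose_one, hQt]
          rw [Matrix.mul_sub, Matrix.sub_mul, Matrix.sub_mul, hQQ]
          simp
        have hnn : 0 ≤ (R * Rᵀ) i i := by
          rw [Matrix.mul_apply]
          exact Finset.sum_nonneg fun j _ => mul_self_nonneg _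
        rw [hproj] at hnn
        have h1 : (1 : Matrix (Fin N) (Fin N) ℝ) i i = 1 := Matrix.one_apply_eq i
        simp only [hR, Matrix.sub_apply, h1, hQii] at hnn
        linarith
      rw [ha]
      exact pod_combo hK lam t hmono hlam hc0 hc1 hb
    linarith
  · -- equality case
    intro Φ hΦ hcols
    rw [pod_err_trace U Φ hΦ, htrA, hcompl]
    have hdiag : ∀ k : Fin K, (Φᵀ * (U * Uᵀ) * Φ) k k = lam (Fin.castLE hK k) := by
      intro k
      have hcolk : ∀ i, ((U * Uᵀ) * Φ) i k = lam (Fin.castLE hK k) * Φ i k := by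
        intro i
        have h1 : ((U * Uᵀ) * Φ) i k = (U * Uᵀ).mulVec (fun i => Φ i k) i := by
          simp [Matrix.mul_apply, Matrix.mulVec, dotProduct]
        rw [h1, hcols k]
        simp
      rw [Matrix.mul_assoc, Matrix.mul_apply]
      have h2 : ∑ i, Φᵀ k i * ((U * Uᵀ) * Φ) i k
          = lam (Fin.castLE hK k) * ∑ i, Φ i k * Φ i k := by
        rw [Finset.mul_sum]
        apply Finset.sum_congr rfl
        intro i _
        rw [Matrix.transpose_apply, hcolk i]
        ring
      rw [h2]
      have h3 : ∑ i, Φ i k * Φ i k = (Φᵀ * Φ) k k := by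
        simp [Matrix.mul_apply, Matrix.transpose_apply]
      rw [h3, hΦ, Matrix.one_apply_eq, mul_one]
    have htr : Matrix.trace (Φᵀ * (U * Uᵀ) * Φ)
        = ∑ i ∈ Finset.univ.filter (fun i : Fin N => (i : ℕ) < K), lam i := by
      rw [pod_sum_filter_lt hK lam]
      simp only [Matrix.trace, Matrix.diag]
      exact Finset.sum_congr rfl fun k _ => hdiag k
    rw [htr]
end
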